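/- arXiv:1306.2932 — 6 statements merged into one kernel-verified Lean document; each statement's English description precedes it below -/
import Mathlib

section
/- Let G be a graph with a complete α-labeling f with critical number k on n = m+1 vertices. Then f*(v) := (k − f(v)) mod n is again a complete α-labeling of G. -/
def GracefulLabeling {V : Type*} (G : SimpleGraph V) (m : ℕ) (f : V → ℕ) : Prop :=
  Function.Injective f ∧ (∀ v, f v ≤ m) ∧
    ∀ ⦃u v x y : V⦄, G.Adj u v → G.Adj x y →
      ((f u : ℤ) - f v).natAbs = ((f x : ℤ) - f y).natAbs → s(u, v) = s(x, y)

def AlphaLabeling {V : Type*} (G : SimpleGraph V) (m : ℕ) (f : V → ℕ) (k : ℕ) : Prop :=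
  GracefulLabeling G m f ∧ k ≤ m ∧
    ∀ ⦃u v : V⦄, G.Adj u v → min (f u) (f v) ≤ k ∧ k < max (f u) (f v)

def CompleteAlphaLabeling {V : Type*} (G : SimpleGraph V) (m : ℕ) (f : V → ℕ) (k : ℕ) : Prop :=
  AlphaLabeling G m f k ∧ ∀ l ≤ m, ∃ v, f v = l

def SimpleGraph.disjUnion' {ι : Type*} {V : ι → Type*} (G : ∀ i, SimpleGraph (V i)) :
    SimpleGraph (Σ i, V i) where
  Adj := fun a b => ∃ h : a.1 = b.1, (G b.1).Adj (h ▸ a.2) b.2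
  symm := by
    constructor
    rintro ⟨i, x⟩ ⟨j, y⟩ ⟨h, hadj⟩
    dsimp only at h
    subst h
    exact ⟨rfl, hadj.symm⟩
  loopless := by
    constructor
    rintro ⟨i, x⟩ ⟨h, hadj⟩
    exact (G i).loopless.irrefl _ hadj

theorem stmt3 {V : Type*} (G : SimpleGraph V) (n m k : ℕ) (hn : n = m + 1)
    (f : V → ℕ) (hf : CompleteAlphaLabeling G m f k) :
    ∃ k' : ℕ, CompleteAlphaLabeling G m (fun v => (((k : ℤ) - (f v : ℤ)) % (n : ℤ)).toNat) k' := by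
  obtain ⟨⟨⟨finj, fbd, fedge⟩, hkm, hcrit⟩, fsurj⟩ := hf
  subst hn
  set N : ℤ := ((m+1:ℕ):ℤ) with hN
  have hNm : N = (m:ℤ) + 1 := by push_cast [hN]; ring
  have hn0 : (0:ℤ) < N := by omega
  have hg : ∀ v, 0 ≤ ((k:ℤ) - f v) % N ∧ ((k:ℤ) - f v) % N < N :=
    fun v => ⟨Int.emod_nonneg _ (by omega), Int.emod_lt_of_pos _ hn0⟩
  have hcast : ∀ v, (((((k:ℤ) - f v) % N).toNat : ℤ)) = ((k:ℤ) - f v) % N :=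
    fun v => Int.toNat_of_nonneg (hg v).1
  have hlow : ∀ u v : V, G.Adj u v → f u ≤ k →
      ((k:ℤ) - f u) % N = (k:ℤ) - f u ∧ ((k:ℤ) - f v) % N = (k:ℤ) - f v + N := by
    intro u v hadj hu
    have hc := hcrit hadj
    have hbu := fbd u
    have hbv := fbd v
    have hv : k < f v := by omega
    refine ⟨Int.emod_eq_of_lt (by omega) (by omega), ?_⟩
    have h1 : ((k:ℤ) - f v + N) % N = ((k:ℤ) - f v) % N := by
      simpa using Int.add_mul_emod_self_left (a := (k:ℤ) - f v) (b := N) (c := 1)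
    rw [← h1]
    exact Int.emod_eq_of_lt (by omega) (by omega)
  have label : ∀ u v : V, G.Adj u v →
      ((((k:ℤ) - f u) % N) - (((k:ℤ) - f v) % N)).natAbs + (((f u : ℤ)) - f v).natAbs = m + 1 := by
    intro u v hadj
    have hc := hcrit hadj
    have hbu := fbd u
    have hbv := fbd v
    rcases le_or_gt (f u) k with h | h
    · obtain ⟨e1, e2⟩ := hlow u v hadj h
      rw [e1, e2]; omega
    · have hv : f v ≤ k := by omega
      obtain ⟨e1, e2⟩ := hlow v u hadj.symm hv
      rw [e1, e2]; omega
  refine ⟨k, ⟨⟨⟨?_, ?_, ?_⟩, hkm, ?_⟩, ?_⟩⟩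
  · -- injective
    intro u v h
    simp only at h
    have h' : ((k:ℤ) - f u) % N = ((k:ℤ) - f v) % N := by
      rw [← hcast u, ← hcast v, h]
    have hd : N ∣ (((k:ℤ) - f u) - ((k:ℤ) - f v)) := by
      rw [Int.dvd_iff_emod_eq_zero, Int.sub_emod, h', sub_self, Int.zero_emod]
    have h0 : ((k:ℤ) - f u) - ((k:ℤ) - f v) = 0 := by
      refine Int.eq_zero_of_dvd_of_natAbs_lt_natAbs hd ?_
      have hbu := fbd u; have hbv := fbd v
      omega
    have : f u = f v := by omega
    exact finj this
  · -- bound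
    intro v
    simp only
    obtain ⟨h1a, h1b⟩ := hg v
    rw [← hcast v] at h1a h1b
    omega
  · -- edges determined by labels
    intro u v x y hadj hadj2 heq
    simp only at heq
    rw [hcast, hcast, hcast, hcast] at heq
    have l1 := label u v hadj
    have l2 := label x y hadj2
    exact fedge hadj hadj2 (by omega)
  · -- alpha condition
    intro u v hadj
    simp only
    have hc := hcrit hadj
    have hbu := fbd u
    have hbv := fbd v
    rcases le_or_gt (f u) k with h | h
    · obtain ⟨e1, e2⟩ := hlow u v hadj h
      rw [e1, e2]; constructor <;> omega
    · have hv : f v ≤ k := by omega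
      obtain ⟨e1, e2⟩ := hlow v u hadj.symm hv
      rw [e1, e2]; constructor <;> omega
  · -- surjective
    intro l hl
    obtain ⟨v, hv⟩ := fsurj ((k + (m+1) - l) % (m+1)) (by
      have := Nat.mod_lt (k + (m+1) - l) (show 0 < m + 1 by omega); omega)
    refine ⟨v, ?_⟩
    simp only
    have hfv : (f v : ℤ) = ((k:ℤ) + (m+1) - l) % N := by
      rw [hv, hNm]
      push_cast [Nat.cast_sub (show l ≤ k + (m+1) by omega)]
      ring_nf
    rw [hfv]
    have e1 : ((k:ℤ) - ((k:ℤ) + (m+1) - l) % N) % N = ((k:ℤ) - ((k:ℤ) + (m+1) - l)) % N := by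
      rw [Int.sub_emod ((k:ℤ)) (((k:ℤ) + (m+1) - l) % N), Int.emod_emod_of_dvd _ dvd_rfl,
        ← Int.sub_emod]
    rw [e1]
    have e2 : (k:ℤ) - ((k:ℤ) + (m+1) - l) = (l:ℤ) - (m+1) := by ring
    rw [e2]
    have e3 : ((l:ℤ) - (m+1)) % N = ((l:ℤ) - (m+1) + N) % N := by
      symm; simpa using Int.add_mul_emod_self_left (a := (l:ℤ) - (m+1)) (b := N) (c := 1)
    rw [e3]
    have e4 : (l:ℤ) - (m+1) + N = (l:ℤ) := by omega
    rw [e4, Int.emod_eq_of_lt (by omega) (by omega)]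
    omega
end

section
/- Any double of a graceful tree with m edges has a complete α-labeling with critical number m. -/
open SimpleGraph Walk

section Aux

lemma tree_dist_ne {V : Type*} [DecidableEq V] {T : SimpleGraph V} (hT : T.IsTree) (w : V)
    {u v : V} (h : T.Adj u v) : T.dist w u ≠ T.dist w v := by
  intro heq
  obtain ⟨p, hp, hpl⟩ := hT.isConnected.exists_path_of_dist w u
  by_cases hv : v ∈ p.support
  · have h1 : T.dist w v ≤ (p.takeUntil v hv).length := SimpleGraph.dist_le _
    have h2 : T.dist v u ≤ (p.dropUntil v hv).length := SimpleGraph.dist_le _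
    have h3 : (p.takeUntil v hv).length + (p.dropUntil v hv).length = p.length := by
      rw [← Walk.length_append, Walk.take_spec]
    have hpos : 0 < T.dist v u := hT.isConnected.pos_dist_of_ne h.ne.symm
    omega
  · have hq : (p.concat h).IsPath := by
      rw [← Walk.isPath_reverse_iff, Walk.reverse_concat]
      exact hp.reverse.cons (by simpa [Walk.support_reverse] using hv)
    obtain ⟨r, hr, hrl⟩ := hT.isConnected.exists_path_of_dist w v
    obtain ⟨q0, _, huniq⟩ := hT.existsUnique_path w v
    have := (huniq _ hq).trans (huniq _ hr).symm
    have hlen : (p.concat h).length = r.length := by rw [this]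
    rw [Walk.length_concat, hpl, hrl] at hlen
    omega

lemma tree_parity {V : Type*} {T : SimpleGraph V} (hT : T.IsTree) (w : V) {u v : V}
    (h : T.Adj u v) : (Even (T.dist w u) ↔ ¬ Even (T.dist w v)) := by
  classical
  have hne := tree_dist_ne hT w h
  obtain ⟨p, hp, hpl⟩ := hT.isConnected.exists_path_of_dist w u
  obtain ⟨q, hq, hql⟩ := hT.isConnected.exists_path_of_dist w v
  have le1 : T.dist w v ≤ T.dist w u + 1 := by
    have := SimpleGraph.dist_le (p.concat h)
    rwa [Walk.length_concat, hpl] at this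
  have le2 : T.dist w u ≤ T.dist w v + 1 := by
    have := SimpleGraph.dist_le (q.concat h.symm)
    rwa [Walk.length_concat, hql] at this
  have : T.dist w v = T.dist w u + 1 ∨ T.dist w u = T.dist w v + 1 := by omega
  rcases this with h' | h' <;> rw [h'] <;> simp [Nat.even_add_one]

end Aux

def double {V : Type*} (G : SimpleGraph V) (w : V) : SimpleGraph (V ⊕ V) :=
  SimpleGraph.fromRel (fun a b =>
    (∃ x y, a = Sum.inl x ∧ b = Sum.inl y ∧ G.Adj x y) ∨
    (∃ x y, a = Sum.inr x ∧ b = Sum.inr y ∧ G.Adj x y) ∨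
    (a = Sum.inl w ∧ b = Sum.inr w))

lemma double_adj_cases {V : Type*} {T : SimpleGraph V} {w : V} {a b : V ⊕ V}
    (h : (double T w).Adj a b) :
    (∃ x y, T.Adj x y ∧ ((a = Sum.inl x ∧ b = Sum.inl y) ∨ (a = Sum.inr x ∧ b = Sum.inr y))) ∨
    ((a = Sum.inl w ∧ b = Sum.inr w) ∨ (a = Sum.inr w ∧ b = Sum.inl w)) := by
  rw [double, SimpleGraph.fromRel_adj] at h
  obtain ⟨hne, h | h⟩ := h <;>
    rcases h with ⟨x, y, ha, hb, hxy⟩ | ⟨x, y, ha, hb, hxy⟩ | ⟨ha, hb⟩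
  · exact Or.inl ⟨x, y, hxy, Or.inl ⟨ha, hb⟩⟩
  · exact Or.inl ⟨x, y, hxy, Or.inr ⟨ha, hb⟩⟩
  · exact Or.inr (Or.inl ⟨ha, hb⟩)
  · exact Or.inl ⟨y, x, hxy.symm, Or.inl ⟨hb, ha⟩⟩
  · exact Or.inl ⟨y, x, hxy.symm, Or.inr ⟨hb, ha⟩⟩
  · exact Or.inr (Or.inr ⟨hb, ha⟩)

theorem stmt5 {V : Type*} [Fintype V] (T : SimpleGraph V) [DecidableRel T.Adj]
    (m j : ℕ) (hT : T.IsTree) (hm : T.edgeFinset.card = m)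
    (f : V → ℕ) (hf : GracefulLabeling T m f) (hsurj : ∀ l ≤ m, ∃ v, f v = l)
    (w : V) (hw : f w = j) :
    ∃ g : V ⊕ V → ℕ, CompleteAlphaLabeling (double T w) (2 * m + 1) g m := by
  classical
  obtain ⟨finj, fbd, fedge⟩ := hf
  set c : V → Prop := fun v => Even (T.dist w v) with hc
  have cpar : ∀ {u v : V}, T.Adj u v → (c u ↔ ¬ c v) := fun h => tree_parity hT w h
  have cw : c w := by simp [hc, SimpleGraph.dist_self]
  set g : V ⊕ V → ℕ := Sum.elim (fun v => if c v then f v else f v + (m + 1))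
    (fun v => if c v then f v + (m + 1) else f v) with hg
  have gl : ∀ x, g (Sum.inl x) = if c x then f x else f x + (m + 1) := fun _ => rfl
  have gr : ∀ x, g (Sum.inr x) = if c x then f x + (m + 1) else f x := fun _ => rfl
  -- the three kinds of edge labels
  have keyL : ∀ x y, T.Adj x y → c x → ¬ c y →
      (((g (Sum.inl x) : ℤ) - g (Sum.inl y)).natAbs : ℤ) = (m + 1) + ((f y : ℤ) - f x) := by
    intro x y hxy hx hy
    rw [gl x, gl y, if_pos hx, if_neg hy]
    have h1 : f x ≤ m := fbd x
    omega
  have keyR : ∀ x y, T.Adj x y → c x → ¬ c y →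
      (((g (Sum.inr x) : ℤ) - g (Sum.inr y)).natAbs : ℤ) = (m + 1) + ((f x : ℤ) - f y) := by
    intro x y hxy hx hy
    rw [gr x, gr y, if_pos hx, if_neg hy]
    have h1 : f y ≤ m := fbd y
    omega
  have keyB : (((g (Sum.inl w) : ℤ) - g (Sum.inr w)).natAbs : ℤ) = (m + 1) + 0 := by
    rw [gl w, gr w, if_pos cw, if_pos cw]
    omega
  have natAbs_comm : ∀ A B : ℤ, (A - B).natAbs = (B - A).natAbs := fun A B => by omega
  -- characterization of labels of edges of the double
  have char : ∀ a b : V ⊕ V, (double T w).Adj a b →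
      ∃ t : ℤ, (((g a : ℤ) - g b).natAbs : ℤ) = (m + 1) + t ∧
        ((t = 0 ∧ s(a, b) = s(Sum.inl w, Sum.inr w)) ∨
          ∃ x y, T.Adj x y ∧ c x ∧ ¬ c y ∧
            ((t = (f y : ℤ) - f x ∧ s(a, b) = s(Sum.inl x, Sum.inl y)) ∨
             (t = (f x : ℤ) - f y ∧ s(a, b) = s(Sum.inr x, Sum.inr y)))) := by
    intro a b hab
    rcases double_adj_cases hab with ⟨x, y, hxy, ⟨ha, hb⟩ | ⟨ha, hb⟩⟩ | ⟨ha, hb⟩ | ⟨ha, hb⟩ <;>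
      subst ha <;> subst hb
    · by_cases hx : c x
      · have hy : ¬ c y := (cpar hxy).mp hx
        exact ⟨(f y : ℤ) - f x, keyL x y hxy hx hy,
          Or.inr ⟨x, y, hxy, hx, hy, Or.inl ⟨rfl, rfl⟩⟩⟩
      · have hy : c y := by
          by_contra hy
          exact hx ((cpar hxy).mpr hy)
        refine ⟨(f x : ℤ) - f y, ?_, Or.inr ⟨y, x, hxy.symm, hy, hx, Or.inl ⟨rfl, Sym2.eq_swap⟩⟩⟩
        rw [← keyL y x hxy.symm hy hx]
        congr 1
        exact natAbs_comm _ _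
    · by_cases hx : c x
      · have hy : ¬ c y := (cpar hxy).mp hx
        exact ⟨(f x : ℤ) - f y, keyR x y hxy hx hy,
          Or.inr ⟨x, y, hxy, hx, hy, Or.inr ⟨rfl, rfl⟩⟩⟩
      · have hy : c y := by
          by_contra hy
          exact hx ((cpar hxy).mpr hy)
        refine ⟨(f y : ℤ) - f x, ?_, Or.inr ⟨y, x, hxy.symm, hy, hx, Or.inr ⟨rfl, Sym2.eq_swap⟩⟩⟩
        rw [← keyR y x hxy.symm hy hx]
        congr 1
        exact natAbs_comm _ _
    · exact ⟨0, keyB, Or.inl ⟨rfl, rfl⟩⟩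
    · refine ⟨0, ?_, Or.inl ⟨rfl, Sym2.eq_swap⟩⟩
      rw [← keyB]
      congr 1
      exact natAbs_comm _ _
  -- injectivity of labeling
  have ginj : Function.Injective g := by
    intro a b hab
    have key : ∀ v : V, f v ≤ m := fbd
    rcases a with x | x <;> rcases b with y | y <;>
      simp only [gl, gr] at hab <;> split_ifs at hab with h1 h2 h2
    · exact congrArg _ (finj hab)
    · exact absurd hab (by have := key x; have := key y; omega)
    · exact absurd hab (by have := key x; have := key y; omega)
    · exact congrArg _ (finj (by omega))
    · exact absurd hab (by have := key x; have := key y; omega)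
    · exact absurd (finj hab) (fun h => h2 (h ▸ h1))
    · exact absurd (finj (by omega : f x = f y)) (fun h => h1 (h ▸ h2))
    · exact absurd hab (by have := key x; have := key y; omega)
    · exact absurd hab (by have := key x; have := key y; omega)
    · exact absurd (finj (by omega : f x = f y)) (fun h => h2 (h ▸ h1))
    · exact absurd (finj hab) (fun h => h1 (h ▸ h2))
    · exact absurd hab (by have := key x; have := key y; omega)
    · exact congrArg _ (finj (by omega))
    · exact absurd hab (by have := key x; have := key y; omega)
    · exact absurd hab (by have := key x; have := key y; omega)
    · exact congrArg _ (finj hab)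
  refine ⟨g, ⟨⟨⟨ginj, ?_, ?_⟩, by omega, ?_⟩, ?_⟩⟩
  · -- bounds
    intro v
    rcases v with x | x <;> simp only [gl, gr] <;> split_ifs <;> have := fbd x <;> omega
  · -- graceful edge condition
    intro a b a' b' h1 h2 heq
    obtain ⟨t1, e1, c1⟩ := char a b h1
    obtain ⟨t2, e2, c2⟩ := char a' b' h2
    have ht : t1 = t2 := by omega
    subst ht
    have tne : ∀ x y : V, T.Adj x y → ((f y : ℤ) - f x ≠ 0) := by
      intro x y hxy h0
      have h1 : f y = f x := by exact_mod_cast sub_eq_zero.mp h0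
      exact hxy.ne (finj h1).symm
    rcases c1 with ⟨ht1, hs1⟩ | ⟨x1, y1, hxy1, hcx1, hcy1, hd1⟩
    · rcases c2 with ⟨ht2, hs2⟩ | ⟨x2, y2, hxy2, hcx2, hcy2, hd2⟩
      · rw [hs1, hs2]
      · exfalso
        rcases hd2 with ⟨ht2, _⟩ | ⟨ht2, _⟩
        · exact tne x2 y2 hxy2 (by omega)
        · exact tne y2 x2 hxy2.symm (by omega)
    · rcases c2 with ⟨ht2, hs2⟩ | ⟨x2, y2, hxy2, hcx2, hcy2, hd2⟩
      · exfalso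
        rcases hd1 with ⟨ht1, _⟩ | ⟨ht1, _⟩
        · exact tne x1 y1 hxy1 (by omega)
        · exact tne y1 x1 hxy1.symm (by omega)
      · -- both genuine tree edges; underlying edges coincide
        have habs : ((f x1 : ℤ) - f y1).natAbs = ((f x2 : ℤ) - f y2).natAbs := by
          rcases hd1 with ⟨ht1, _⟩ | ⟨ht1, _⟩ <;> rcases hd2 with ⟨ht2, _⟩ | ⟨ht2, _⟩ <;> omega
        have hsym := fedge hxy1 hxy2 habs
        rw [Sym2.eq_iff] at hsym
        rcases hsym with ⟨hx, hy⟩ | ⟨hx, hy⟩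
        · subst hx; subst hy
          rcases hd1 with ⟨ht1, hs1⟩ | ⟨ht1, hs1⟩
          · rcases hd2 with ⟨ht2, hs2⟩ | ⟨ht2, hs2⟩
            · rw [hs1, hs2]
            · exact absurd (tne x1 y1 hxy1) (by omega)
          · rcases hd2 with ⟨ht2, hs2⟩ | ⟨ht2, hs2⟩
            · exact absurd (tne x1 y1 hxy1) (by omega)
            · rw [hs1, hs2]
        · exact absurd (hx ▸ hcx1) hcy2
  · -- alpha condition
    intro a b hab
    rcases double_adj_cases hab with ⟨x, y, hxy, ⟨ha, hb⟩ | ⟨ha, hb⟩⟩ | ⟨ha, hb⟩ | ⟨ha, hb⟩ <;>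
      subst ha <;> subst hb <;> simp only [gl, gr]
    · by_cases hx : c x
      · have hy : ¬ c y := (cpar hxy).mp hx
        rw [if_pos hx, if_neg hy]
        have := fbd x
        omega
      · have hy : c y := by by_contra hy; exact hx ((cpar hxy).mpr hy)
        rw [if_neg hx, if_pos hy]
        have := fbd y
        omega
    · by_cases hx : c x
      · have hy : ¬ c y := (cpar hxy).mp hx
        rw [if_pos hx, if_neg hy]
        have := fbd y
        omega
      · have hy : c y := by by_contra hy; exact hx ((cpar hxy).mpr hy)
        rw [if_neg hx, if_pos hy]
        have := fbd x
        omega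
    · rw [if_pos cw, if_pos cw]
      have := fbd w
      omega
    · rw [if_pos cw, if_pos cw]
      have := fbd w
      omega
  · -- surjectivity
    intro l hl
    by_cases hsmall : l ≤ m
    · obtain ⟨v, hv⟩ := hsurj l hsmall
      by_cases hcv : c v
      · exact ⟨Sum.inl v, by rw [gl, if_pos hcv, hv]⟩
      · exact ⟨Sum.inr v, by rw [gr, if_neg hcv, hv]⟩
    · obtain ⟨v, hv⟩ := hsurj (l - (m + 1)) (by omega)
      by_cases hcv : c v
      · exact ⟨Sum.inr v, by rw [gr, if_pos hcv, hv]; omega⟩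
      · exact ⟨Sum.inl v, by rw [gl, if_neg hcv, hv]; omega⟩
end

section
/- Suppose x₁,...,x_r and y₁,...,y_r are positive integers satisfying: for odd i, x_i = y_{r−(i−1)/2} and y_i = x_{r−(i−1)/2}; for even i, x_i = x_{i/2} and y_i = y_{i/2} (for all 1 ≤ i ≤ r). Then for every odd i with 1 ≤ i ≤ r, the sum of x_t for t from (i+1)/2 to i equals the sum of y_t for t from r−(i−1)/2 to r. -/
theorem stmt13 (r : ℕ) (x y : ℕ → ℕ)
    (hx : ∀ i, 1 ≤ i → i ≤ r → 0 < x i) (hy : ∀ i, 1 ≤ i → i ≤ r → 0 < y i)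
    (hodd : ∀ i, 1 ≤ i → i ≤ r → Odd i →
      x i = y (r - (i - 1) / 2) ∧ y i = x (r - (i - 1) / 2))
    (heven : ∀ i, 1 ≤ i → i ≤ r → Even i → x i = x (i / 2) ∧ y i = y (i / 2)) :
    ∀ i, 1 ≤ i → i ≤ r → Odd i →
      ∑ t ∈ Finset.Icc ((i + 1) / 2) i, x t = ∑ t ∈ Finset.Icc (r - (i - 1) / 2) r, y t := by
  suffices key : ∀ j, 2*j+1 ≤ r →
      ∑ t ∈ Finset.Icc (j+1) (2*j+1), x t = ∑ t ∈ Finset.Icc (r-j) r, y t by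
    intro i hi1 hir ho
    obtain ⟨j, hj⟩ := ho
    have h1 : (i + 1) / 2 = j + 1 := by omega
    have h2 : (i - 1) / 2 = j := by omega
    rw [h1, h2]
    have := key j (by omega)
    convert this using 3 <;> omega
  intro j
  induction j with
  | zero =>
    intro h
    simp only [Nat.mul_zero, Nat.zero_add, Nat.sub_zero, Finset.Icc_self,
      Finset.sum_singleton]
    have := (hodd 1 le_rfl (by omega) odd_one).1
    simpa using this
  | succ j ih =>
    intro h
    have hj : 2*j+1 ≤ r := by omega
    have ih' := ih hj
    have hx1 : x (2*j+1+1) = x (j+1) := by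
      have := (heven (2*j+2) (by omega) (by omega) ⟨j+1, by ring⟩).1
      have h2 : (2*j+2)/2 = j+1 := by omega
      rw [h2] at this
      convert this using 2
    have hx2 : x (2*j+1+1+1) = y (r-(j+1)) := by
      have := (hodd (2*j+3) (by omega) (by omega) ⟨j+1, by ring⟩).1
      have h2 : (2*j+3-1)/2 = j+1 := by omega
      rw [h2] at this
      convert this using 2
    have e1 : ∑ t ∈ Finset.Icc (j+1) (2*(j+1)+1), x t
        = ∑ t ∈ Finset.Icc (j+1) (2*j+1), x t + x (2*j+1+1) + x (2*j+1+1+1) := by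
      have g : 2*(j+1)+1 = (2*j+1+1)+1 := by ring
      rw [g, Finset.sum_Icc_succ_top (by omega), Finset.sum_Icc_succ_top (by omega)]
    have e2 : ∑ t ∈ Finset.Icc (j+1) (2*(j+1)+1), x t
        = x (j+1) + ∑ t ∈ Finset.Icc (j+1+1) (2*(j+1)+1), x t := by
      rw [← Finset.insert_Icc_add_one_left_eq_Icc (by omega), Finset.sum_insert (by simp)]
    have e3 : ∑ t ∈ Finset.Icc (r-(j+1)) r, y t
        = y (r-(j+1)) + ∑ t ∈ Finset.Icc (r-j) r, y t := by
      have g : r - j = (r-(j+1)) + 1 := by omega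
      rw [g, ← Finset.insert_Icc_add_one_left_eq_Icc (by omega), Finset.sum_insert (by simp)]
    omega
end

section
/- Suppose x₁,...,x_r and y₁,...,y_r are positive integers satisfying: for odd i, x_i = y_{r−(i−1)/2} and y_i = x_{r−(i−1)/2}; for even i, x_i = x_{i/2} and y_i = y_{i/2} (for all 1 ≤ i ≤ r). Then for every even j with 2 ≤ j ≤ r, the sum of x_t for t from j/2 + 1 to j equals the sum of y_t for t from r − j/2 + 1 to r. -/
theorem stmt14 (r : ℕ) (x y : ℕ → ℕ)
    (hx : ∀ i, 1 ≤ i → i ≤ r → 0 < x i) (hy : ∀ i, 1 ≤ i → i ≤ r → 0 < y i)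
    (hodd : ∀ i, 1 ≤ i → i ≤ r → Odd i →
      x i = y (r - (i - 1) / 2) ∧ y i = x (r - (i - 1) / 2))
    (heven : ∀ i, 1 ≤ i → i ≤ r → Even i → x i = x (i / 2) ∧ y i = y (i / 2)) :
    ∀ j, 2 ≤ j → j ≤ r → Even j →
      ∑ t ∈ Finset.Icc (j / 2 + 1) j, x t = ∑ t ∈ Finset.Icc (r - j / 2 + 1) r, y t := by
  have main : ∀ j, j ≤ r → ∑ t ∈ Finset.Icc (j / 2 + 1) j, x t
      = ∑ t ∈ Finset.Icc (r - (j + 1) / 2 + 1) r, y t := by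
    intro j
    induction j with
    | zero => intro _; simp
    | succ n ih =>
      intro hn
      have hnr : n ≤ r := Nat.le_of_succ_le hn
      have IH := ih hnr
      rcases Nat.even_or_odd n with he | ho
      · -- n even, n+1 odd
        obtain ⟨m, hm⟩ := he
        subst hm
        simp only [show (m + m) / 2 = m from by omega,
          show (m + m + 1) / 2 = m from by omega,
          show (m + m + 1 + 1) / 2 = m + 1 from by omega] at IH ⊢
        have hsplit : ∑ t ∈ Finset.Icc (m + 1) (m + m + 1), x t
            = ∑ t ∈ Finset.Icc (m + 1) (m + m), x t + x (m + m + 1) :=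
          Finset.sum_Icc_succ_top (by omega) x
        have hxodd : x (m + m + 1) = y (r - m) := by
          have h := (hodd (m + m + 1) (by omega) hn ⟨m, by omega⟩).1
          have : (m + m + 1 - 1) / 2 = m := by omega
          rwa [this] at h
        have hins : Finset.Icc (r - m) r = insert (r - m) (Finset.Icc (r - m + 1) r) := by
          ext t
          simp only [Finset.mem_Icc, Finset.mem_insert]
          omega
        have hnm : r - (m + 1) + 1 = r - m := by omega
        have hnotmem : r - m ∉ Finset.Icc (r - m + 1) r := by
          simp only [Finset.mem_Icc]; omega
        rw [hsplit, hxodd, hnm, hins, Finset.sum_insert hnotmem]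
        omega
      · -- n odd, n+1 even
        obtain ⟨m, hm⟩ := ho
        subst hm
        simp only [show (2 * m + 1) / 2 = m from by omega,
          show (2 * m + 1 + 1) / 2 = m + 1 from by omega,
          show (2 * m + 1 + 1 + 1) / 2 = m + 1 from by omega] at IH ⊢
        have e1 : ∑ t ∈ Finset.Icc (m + 1) (2 * m + 1 + 1), x t
            = ∑ t ∈ Finset.Icc (m + 1) (2 * m + 1), x t + x (2 * m + 1 + 1) :=
          Finset.sum_Icc_succ_top (by omega) x
        have hins : Finset.Icc (m + 1) (2 * m + 1 + 1)
            = insert (m + 1) (Finset.Icc (m + 1 + 1) (2 * m + 1 + 1)) := by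
          ext t
          simp only [Finset.mem_Icc, Finset.mem_insert]
          omega
        have hnotmem : m + 1 ∉ Finset.Icc (m + 1 + 1) (2 * m + 1 + 1) := by
          simp only [Finset.mem_Icc]; omega
        have e2 : ∑ t ∈ Finset.Icc (m + 1) (2 * m + 1 + 1), x t
            = x (m + 1) + ∑ t ∈ Finset.Icc (m + 1 + 1) (2 * m + 1 + 1), x t := by
          rw [hins, Finset.sum_insert hnotmem]
        have hxe : x (2 * m + 1 + 1) = x (m + 1) := by
          have h := (heven (2 * m + 1 + 1) (by omega) hn ⟨m + 1, by omega⟩).1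
          have : (2 * m + 1 + 1) / 2 = m + 1 := by omega
          rwa [this] at h
        omega
  intro j h2 hjr hje
  have h := main j hjr
  have heq : (j + 1) / 2 = j / 2 := by
    obtain ⟨m, hm⟩ := hje; omega
  rwa [heq] at h
end

section
/- For each odd natural number j with 1 ≤ j ≤ i (i odd), there exists a unique natural number r ≥ 0 such that j·2^r lies in the interval [(i+1)/2, i]. -/
theorem stmt16 (i : ℕ) (hi : Odd i) (j : ℕ) (hj : Odd j) (hj1 : 1 ≤ j) (hji : j ≤ i) :
    ∃! n : ℕ, (i + 1) / 2 ≤ j * 2 ^ n ∧ j * 2 ^ n ≤ i := by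
  obtain ⟨t, ht⟩ := hi
  set P : ℕ → Prop := fun n => j * 2 ^ n ≤ i with hP
  have hP0 : P 0 := by simp only [hP, pow_zero, mul_one]; exact hji
  set n := Nat.findGreatest P i with hn
  have hPn : P n := Nat.findGreatest_spec (Nat.zero_le i) hP0
  have hni : n < i := by
    by_contra h
    push_neg at h
    have h2 : i < 2 ^ n := lt_of_lt_of_le (Nat.lt_two_pow_self (n := i)) (Nat.pow_le_pow_right (by norm_num) h)
    have : 2 ^ n ≤ j * 2 ^ n := Nat.le_mul_of_pos_left _ hj1
    omega
  have hnot : ¬ P (n + 1) := Nat.findGreatest_is_greatest (Nat.lt_succ_self n) hni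
  have key : ∀ m, (P m ∧ ¬ P (m + 1)) → (i + 1) / 2 ≤ j * 2 ^ m ∧ j * 2 ^ m ≤ i := by
    rintro m ⟨h1, h2⟩
    simp only [hP, pow_succ, ← mul_assoc, not_le] at h1 h2 ⊢
    omega
  refine ⟨n, key n ⟨hPn, hnot⟩, ?_⟩
  rintro m ⟨hm1, hm2⟩
  by_contra hne
  rcases Nat.lt_or_ge m n with h | h
  · have : j * 2 ^ (m + 1) ≤ j * 2 ^ n := Nat.mul_le_mul_left _ (Nat.pow_le_pow_right (by norm_num) h)
    rw [pow_succ, ← mul_assoc] at this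
    omega
  · have hlt : n < m := lt_of_le_of_ne h (fun e => hne e.symm)
    have : j * 2 ^ (n + 1) ≤ j * 2 ^ m := Nat.mul_le_mul_left _ (Nat.pow_le_pow_right (by norm_num) hlt)
    rw [pow_succ, ← mul_assoc] at this
    simp only [hP, not_le, pow_succ, ← mul_assoc] at hnot
    omega
end

section
/- A graph G with n vertices and m edges, with n ≤ m + 1, has an α-labeling with critical number k if and only if G is bipartite and, after adding m+1−n isolated vertices, there is a bipartition of the resulting graph Ĝ with parts of sizes k+1 and m−k whose biadjacency matrix (for suitable orderings of the two parts) is graceful, meaning every diagonal of the (k+1)×(m−k) matrix contains at most one 1 (where the box-value of position (i,j), 1-indexed with the matrix having k+1 rows, is (k+1) + j − i, and a diagonal is the set of positions with a common box-value). -/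
theorem stmt19 {V : Type*} [Fintype V] (G : SimpleGraph V) [DecidableRel G.Adj]
    (n m k : ℕ) (hn : Fintype.card V = n) (hm : G.edgeFinset.card = m)
    (hnm : n ≤ m + 1) (hk : k ≤ m) :
    (∃ f : V → ℕ, AlphaLabeling G m f k) ↔
    ∃ e : (V ⊕ Fin (m + 1 - n)) ≃ (Fin (k + 1) ⊕ Fin (m - k)),
      (∀ u v : V, G.Adj u v →
        ((e (Sum.inl u)).isLeft ↔ (e (Sum.inl v)).isRight)) ∧
      (∀ p q : Fin (k + 1) × Fin (m - k),
        (∃ u v : V, G.Adj u v ∧ e (Sum.inl u) = Sum.inl p.1 ∧ e (Sum.inl v) = Sum.inr p.2) →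
        (∃ u v : V, G.Adj u v ∧ e (Sum.inl u) = Sum.inl q.1 ∧ e (Sum.inl v) = Sum.inr q.2) →
        ((p.2 : ℤ) - (p.1 : ℤ) = (q.2 : ℤ) - (q.1 : ℤ)) → p = q) := by
  classical
  constructor
  · rintro ⟨f, ⟨⟨hinj, hbd, hdist⟩, -, halpha⟩⟩
    set g : V → Fin (m + 1) := fun v => ⟨f v, Nat.lt_succ_of_le (hbd v)⟩ with hgdef
    have hginj : Function.Injective g := fun a b h => hinj (by
      have := congrArg Fin.val h; simpa [g] using this)
    have hS : Fintype.card (Set.range g) = n := by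
      rw [Set.card_range_of_injective hginj, hn]
    have hSc : Fintype.card (↥(Set.range g)ᶜ) = m + 1 - n := by
      rw [Fintype.card_compl_set, hS, Fintype.card_fin]
    let eC : Fin (m + 1 - n) ≃ ↥(Set.range g)ᶜ :=
      (Fintype.equivOfCardEq (by rw [hSc, Fintype.card_fin])).symm
    have hmk : m + 1 = (k + 1) + (m - k) := by omega
    set e : (V ⊕ Fin (m + 1 - n)) ≃ (Fin (k + 1) ⊕ Fin (m - k)) :=
      ((Equiv.ofInjective g hginj).sumCongr eC).trans
        ((Equiv.Set.sumCompl (Set.range g)).trans ((finCongr hmk).trans finSumFinEquiv.symm))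
      with hedef
    have key : ∀ v : V, ((finSumFinEquiv (e (Sum.inl v)) : Fin _) : ℕ) = f v := by
      intro v
      simp [hedef, g]
    have keyL : ∀ (v : V) (i : Fin (k + 1)), e (Sum.inl v) = Sum.inl i → f v = (i : ℕ) := by
      intro v i h
      have := key v
      rw [h] at this
      simpa using this.symm
    have keyR : ∀ (v : V) (j : Fin (m - k)), e (Sum.inl v) = Sum.inr j →
        f v = (k + 1) + (j : ℕ) := by
      intro v j h
      have := key v
      rw [h] at this
      simpa [Fin.natAdd] using this.symm
    refine ⟨e, ?_, ?_⟩
    · intro u v huv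
      have hmm := halpha huv
      rcases le_or_gt (f u) k with hu | hu
      · have hv : k < f v := by omega
        cases hEu : e (Sum.inl u) with
        | inl i =>
          cases hEv : e (Sum.inl v) with
          | inl i' => exact absurd (keyL v i' hEv) (by omega)
          | inr j => simp
        | inr j => exact absurd (keyR u j hEu) (by omega)
      · have hv : f v ≤ k := by omega
        cases hEu : e (Sum.inl u) with
        | inl i => exact absurd (keyL u i hEu) (by omega)
        | inr j =>
          cases hEv : e (Sum.inl v) with
          | inl i' => simp
          | inr j' => exact absurd (keyR v j' hEv) (by omega)
    · rintro ⟨p1, p2⟩ ⟨q1, q2⟩ ⟨u, v, huv, hu, hv⟩ ⟨x, y, hxy, hx, hy⟩ hdiff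
      simp only at hu hv hx hy hdiff
      have hfu := keyL u p1 hu
      have hfv := keyR v p2 hv
      have hfx := keyL x q1 hx
      have hfy := keyR y q2 hy
      have hp1 : (p1 : ℕ) < k + 1 := p1.isLt
      have hq1 : (q1 : ℕ) < k + 1 := q1.isLt
      have habs : ((f u : ℤ) - f v).natAbs = ((f x : ℤ) - f y).natAbs := by
        rw [hfu, hfv, hfx, hfy]
        push_cast
        omega
      have := Sym2.eq_iff.mp (hdist huv hxy habs)
      rcases this with ⟨rfl, rfl⟩ | ⟨rfl, rfl⟩
      · have e1 : (p1 : ℕ) = q1 := by rw [← hfu, ← hfx]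
        have e2 : (p2 : ℕ) = q2 := by
          have := hfv.symm.trans hfy
          omega
        simp [Prod.ext_iff, Fin.ext_iff, e1, e2]
      · exfalso
        have := hfu.symm.trans hfy
        omega
  · rintro ⟨e, h1, h2⟩
    refine ⟨fun v => ((finSumFinEquiv (e (Sum.inl v)) : Fin _) : ℕ), ?_⟩
    set f : V → ℕ := fun v => ((finSumFinEquiv (e (Sum.inl v)) : Fin _) : ℕ) with hfdef
    have hbd : ∀ v, f v ≤ m := by
      intro v
      have := (finSumFinEquiv (e (Sum.inl v))).isLt
      simp only [hfdef]
      omega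
    have hinj : Function.Injective f := by
      intro a b hab
      have : e (Sum.inl a) = e (Sum.inl b) :=
        finSumFinEquiv.injective (Fin.val_injective hab)
      exact Sum.inl.inj (e.injective this)
    have keyL : ∀ (v : V) (i : Fin (k + 1)), e (Sum.inl v) = Sum.inl i → f v = (i : ℕ) := by
      intro v i h
      simp [hfdef, h]
    have keyR : ∀ (v : V) (j : Fin (m - k)), e (Sum.inl v) = Sum.inr j →
        f v = (k + 1) + (j : ℕ) := by
      intro v j h
      simp [hfdef, h, Fin.natAdd]
    have orient : ∀ u v : V, G.Adj u v → ∃ (a b : V) (p1 : Fin (k + 1)) (p2 : Fin (m - k)),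
        s(a, b) = s(u, v) ∧ G.Adj a b ∧
          e (Sum.inl a) = Sum.inl p1 ∧ e (Sum.inl b) = Sum.inr p2 := by
      intro u v huv
      cases hEu : e (Sum.inl u) with
      | inl p1 =>
        have hRv : (e (Sum.inl v)).isRight := (h1 u v huv).mp (by rw [hEu]; rfl)
        rcases Sum.isRight_iff.mp hRv with ⟨p2, hEv⟩
        exact ⟨u, v, p1, p2, rfl, huv, hEu, hEv⟩
      | inr p2 =>
        have hLv : (e (Sum.inl v)).isLeft := by
          rw [← Sum.not_isRight]
          intro h
          have := (h1 u v huv).mpr h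
          rw [hEu] at this
          simp at this
        rcases Sum.isLeft_iff.mp hLv with ⟨p1, hEv⟩
        exact ⟨v, u, p1, p2, Sym2.eq_swap, huv.symm, hEv, hEu⟩
    refine ⟨⟨hinj, hbd, ?_⟩, hk, ?_⟩
    · intro u v x y huv hxy habs
      obtain ⟨a, b, p1, p2, hsab, hab, hEa, hEb⟩ := orient u v huv
      obtain ⟨c, d, q1, q2, hscd, hcd, hEc, hEd⟩ := orient x y hxy
      have hfa := keyL a p1 hEa
      have hfb := keyR b p2 hEb
      have hfc := keyL c q1 hEc
      have hfd := keyR d q2 hEd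
      have hab' : ((f a : ℤ) - f b).natAbs = ((f u : ℤ) - f v).natAbs := by
        rcases Sym2.eq_iff.mp hsab with ⟨rfl, rfl⟩ | ⟨rfl, rfl⟩ <;> omega
      have hcd' : ((f c : ℤ) - f d).natAbs = ((f x : ℤ) - f y).natAbs := by
        rcases Sym2.eq_iff.mp hscd with ⟨rfl, rfl⟩ | ⟨rfl, rfl⟩ <;> omega
      have hp1 : (p1 : ℕ) < k + 1 := p1.isLt
      have hq1 : (q1 : ℕ) < k + 1 := q1.isLt
      have hdiff : ((p2 : ℤ)) - (p1 : ℤ) = ((q2 : ℤ)) - (q1 : ℤ) := by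
        have h0 : ((f a : ℤ) - f b).natAbs = ((f c : ℤ) - f d).natAbs := by omega
        rw [hfa, hfb, hfc, hfd] at h0
        push_cast at h0 ⊢
        omega
      have hpq := h2 (p1, p2) (q1, q2) ⟨a, b, hab, hEa, hEb⟩ ⟨c, d, hcd, hEc, hEd⟩ hdiff
      have hp : p1 = q1 := congrArg Prod.fst hpq
      have hq : p2 = q2 := congrArg Prod.snd hpq
      have hac : a = c := by
        apply Sum.inl.inj (e.injective ?_)
        rw [hEa, hEc, hp]
      have hbd2 : b = d := by
        apply Sum.inl.inj (e.injective ?_)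
        rw [hEb, hEd, hq]
      rw [← hsab, ← hscd, hac, hbd2]
    · intro u v huv
      obtain ⟨a, b, p1, p2, hsab, hab, hEa, hEb⟩ := orient u v huv
      have hfa := keyL a p1 hEa
      have hfb := keyR b p2 hEb
      have hp1 : (p1 : ℕ) < k + 1 := p1.isLt
      rcases Sym2.eq_iff.mp hsab with ⟨rfl, rfl⟩ | ⟨rfl, rfl⟩ <;>
        constructor <;> omega
end
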